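/- arXiv:2009.00991 — 2 statements merged into one kernel-verified Lean document; each statement's English description precedes it below -/
import Mathlib

section
/- Suppose the sequence (v^n)_{n≥0} solves the discrete wave scheme with zero source, i.e. r^n = 0 for all n ≥ 1. Then the discrete energy is exactly conserved: E^{n+1/2}(v) = E^{1/2}(v) for every n ≥ 1. -/
open RealInnerProductSpace

/-- The discrete energy `E^{n+1/2}(v)` of the leapfrog scheme. -/
noncomputable def discE {H : Type*} [NormedAddCommGroup H] [InnerProductSpace ℝ H]
    (W : Submodule ℝ H) [W.HasOrthogonalProjection]
    (a : H →ₗ[ℝ] H →ₗ[ℝ] ℝ) (τ : ℝ) (v : ℕ → H) (n : ℕ) : ℝ :=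
  (1 / 2) * ‖(Submodule.orthogonalProjectionOnto W (τ⁻¹ • (v (n + 1) - v n)) : H)‖ ^ 2
    - (τ ^ 2 / 8) * a (τ⁻¹ • (v (n + 1) - v n)) (τ⁻¹ • (v (n + 1) - v n))
    + (1 / 2) * a ((2 : ℝ)⁻¹ • (v (n + 1) + v n)) ((2 : ℝ)⁻¹ • (v (n + 1) + v n))

/-- Alternative form of the discrete energy. -/
private lemma discE_alt {H : Type*} [NormedAddCommGroup H] [InnerProductSpace ℝ H]
    (W : Submodule ℝ H) [W.HasOrthogonalProjection]
    (a : H →ₗ[ℝ] H →ₗ[ℝ] ℝ) (hsymm : ∀ u w : H, a u w = a w u)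
    (τ : ℝ) (hτ : τ ≠ 0) (A B : H) :
    (1 / 2) * ‖(Submodule.orthogonalProjectionOnto W (τ⁻¹ • (A - B)) : H)‖ ^ 2
    - (τ ^ 2 / 8) * a (τ⁻¹ • (A - B)) (τ⁻¹ • (A - B))
    + (1 / 2) * a ((2 : ℝ)⁻¹ • (A + B)) ((2 : ℝ)⁻¹ • (A + B))
    = (τ ^ 2)⁻¹ * (1/2) * ⟪(Submodule.orthogonalProjectionOnto W (A - B) : H),
        (Submodule.orthogonalProjectionOnto W (A - B) : H)⟫ + (1/2) * a A B := by
  rw [← real_inner_self_eq_norm_sq]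
  simp only [map_smul, Submodule.coe_smul, inner_smul_left, inner_smul_right,
    LinearMap.map_smul, LinearMap.smul_apply, map_sub, map_add,
    LinearMap.sub_apply, LinearMap.add_apply, smul_eq_mul, RCLike.ofReal_real_eq_id, id, conj_trivial]
  rw [hsymm B A]
  field_simp
  ring

/-- One-step energy conservation. -/
private lemma discE_step {H : Type*} [NormedAddCommGroup H] [InnerProductSpace ℝ H]
    (W V : Submodule ℝ H) [W.HasOrthogonalProjection]
    (a : H →ₗ[ℝ] H →ₗ[ℝ] ℝ) (hsymm : ∀ u w : H, a u w = a w u)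
    (τ : ℝ) (hτ : 0 < τ)
    (v r : ℕ → H) (hvV : ∀ n, v n ∈ V)
    (hr : ∀ n, 1 ≤ n → r n = 0)
    (hscheme : ∀ n, 1 ≤ n → ∀ w ∈ V,
      ⟪(Submodule.orthogonalProjectionOnto W ((τ ^ 2)⁻¹ • (v (n + 1) - 2 • v n + v (n - 1))) : H),
        (Submodule.orthogonalProjectionOnto W w : H)⟫ + a (v n) w = ⟪r n, w⟫)
    (m : ℕ) :
    discE W a τ v (m + 1) = discE W a τ v m := by
  have hτ0 : τ ≠ 0 := ne_of_gt hτ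
  have hw : v (m + 2) - v m ∈ V := Submodule.sub_mem _ (hvV _) (hvV _)
  have key := hscheme (m + 1) (by omega) (v (m + 2) - v m) hw
  rw [hr (m + 1) (by omega)] at key
  simp only [Nat.add_sub_cancel, inner_zero_left] at key
  have h2 : (2 : ℕ) • v (m + 1) = (2 : ℝ) • v (m + 1) := by
    simp [two_smul]
  rw [h2] at key
  simp only [map_smul, map_sub, map_add, Submodule.coe_smul, Submodule.coe_sub,
    Submodule.coe_add, inner_smul_left, inner_sub_left, inner_add_left,
    inner_sub_right, inner_smul_right, LinearMap.map_sub, LinearMap.sub_apply,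
    map_sub, smul_eq_mul, RCLike.ofReal_real_eq_id, id, conj_trivial] at key
  unfold discE
  rw [discE_alt W a hsymm τ hτ0, discE_alt W a hsymm τ hτ0]
  have e2 : m + 1 + 1 = m + 2 := rfl
  rw [e2] at key ⊢
  simp only [map_sub, Submodule.coe_sub, inner_sub_left, inner_sub_right]
  rw [hsymm (v (m+1)) (v (m+2)),
    real_inner_comm ((Submodule.orthogonalProjectionOnto W (v m) : H)) ((Submodule.orthogonalProjectionOnto W (v (m+2)) : H)),
    real_inner_comm ((Submodule.orthogonalProjectionOnto W (v m) : H)) ((Submodule.orthogonalProjectionOnto W (v (m+1)) : H)),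
    real_inner_comm ((Submodule.orthogonalProjectionOnto W (v (m+1)) : H)) ((Submodule.orthogonalProjectionOnto W (v (m+2)) : H))] at *
  have hτ2 : (τ^2 : ℝ) ≠ 0 := by positivity
  field_simp at key ⊢
  linarith [key]

/-- Exact discrete energy conservation for the scheme with zero source:
`E^{n+1/2}(v) = E^{1/2}(v)` for all `n ≥ 1`. -/
theorem energy_conservation
    {H : Type*} [NormedAddCommGroup H] [InnerProductSpace ℝ H]
    (W V : Submodule ℝ H) [W.HasOrthogonalProjection]
    (a : H →ₗ[ℝ] H →ₗ[ℝ] ℝ) (hsymm : ∀ u w : H, a u w = a w u)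
    (τ : ℝ) (hτ : 0 < τ)
    (v r : ℕ → H) (hvV : ∀ n, v n ∈ V)
    (hr : ∀ n, 1 ≤ n → r n = 0)
    (hscheme : ∀ n, 1 ≤ n → ∀ w ∈ V,
      ⟪(Submodule.orthogonalProjectionOnto W ((τ ^ 2)⁻¹ • (v (n + 1) - 2 • v n + v (n - 1))) : H),
        (Submodule.orthogonalProjectionOnto W w : H)⟫ + a (v n) w = ⟪r n, w⟫)
    (n : ℕ) (hn : 1 ≤ n) :
    discE W a τ v n = discE W a τ v 0 := by
  induction n with
  | zero => rfl
  | succ m ih =>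
    rw [discE_step W V a hsymm τ hτ v r hvV hr hscheme m]
    rcases Nat.eq_zero_or_pos m with h | h
    · rw [h]
    · exact ih h
end

section
/- Assume a is positive semidefinite on V, the CFL condition holds with constant ρ ∈ [0,1) (τ² a(w,w) ≤ 4ρ² ‖π w‖² for all w ∈ V), and the Poincaré-type inequality ‖w − π w‖² ≤ 2 Λ⁻¹ H² a(w,w) holds for all w ∈ V, where Λ, H > 0. Suppose the sequence (v^n)_{n≥0} solves the discrete wave scheme with source (r^n)_{n≥1}. Then there exists a constant C > 0, depending only on ρ, such that for all n ≥ 1: E^{n+1/2}(v) ≤ C ( E^{1/2}(v) + (τ R₁^n + Λ^{−1/2} H R₂^n)² ), where R₁^n = Σ_{k=1}^{n} ‖π r^k‖ and R₂^n = ‖(I − π) r^1‖ + τ Σ_{k=1}^{n−1} ‖(I − π)((r^{k+1} − r^k)/τ)‖ + ‖(I − π) r^n‖. -/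
open RealInnerProductSpace

section Aux
variable {H : Type*} [NormedAddCommGroup H] [InnerProductSpace ℝ H]

lemma step_alg (π : H →ₗ[ℝ] H) (a : H →ₗ[ℝ] H →ₗ[ℝ] ℝ) (hsym : ∀ u w, a u w = a w u)
    (τ : ℝ) (hτ : τ ≠ 0) (x y z rr : H)
    (hs : ⟪π ((τ ^ 2)⁻¹ • (x - 2 • y + z)), π ((2:ℝ)⁻¹ • (x - z))⟫ + a y ((2:ℝ)⁻¹ • (x - z))
        = ⟪rr, (2:ℝ)⁻¹ • (x - z)⟫) :
    (1/2) * ‖π (τ⁻¹ • (x - y))‖ ^ 2 - (τ^2/8) * a (τ⁻¹ • (x - y)) (τ⁻¹ • (x - y))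
      + (1/2) * a ((2:ℝ)⁻¹ • (x + y)) ((2:ℝ)⁻¹ • (x + y))
    = ((1/2) * ‖π (τ⁻¹ • (y - z))‖ ^ 2 - (τ^2/8) * a (τ⁻¹ • (y - z)) (τ⁻¹ • (y - z))
      + (1/2) * a ((2:ℝ)⁻¹ • (y + z)) ((2:ℝ)⁻¹ • (y + z)))
      + ⟪rr, (2:ℝ)⁻¹ • (x - z)⟫ := by
  have h2 : ∀ u : H, (τ^2/8) * a (τ⁻¹ • u) (τ⁻¹ • u) = (1/8) * a u u := by
    intro u
    simp only [map_smul, LinearMap.smul_apply, smul_eq_mul]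
    field_simp
  rw [h2, h2]
  simp only [← real_inner_self_eq_norm_sq, two_smul, map_add, map_sub, map_smul,
    inner_add_left, inner_add_right, inner_sub_left, inner_sub_right,
    real_inner_smul_left, real_inner_smul_right,
    LinearMap.add_apply, LinearMap.sub_apply, LinearMap.smul_apply, smul_eq_mul] at hs ⊢
  linear_combination hs + (1/4)*hsym x y + (1/4)*hsym y z
    + (1/2)*τ⁻¹^2*real_inner_comm (π x) (π y) + (1/2)*τ⁻¹^2*real_inner_comm (π y) (π z)
    - (1/2)*τ⁻¹^2*real_inner_comm (π x) (π z)

lemma young (x y : ℝ) : x*y ≤ (x^2+y^2)/2 := by nlinarith [sq_nonneg (x-y)]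

lemma sq_le_of_sq_le' {x y : ℝ} (hx : 0 ≤ x) (hy : 0 ≤ y) (h : x^2 ≤ y^2) : x ≤ y := by
  nlinarith

lemma inner_split (W : Submodule ℝ H) [W.HasOrthogonalProjection] (x y : H) :
    ⟪x, y⟫ = ⟪(Submodule.orthogonalProjectionOnto W x : H), (Submodule.orthogonalProjectionOnto W y : H)⟫
      + ⟪x - (Submodule.orthogonalProjectionOnto W x : H), y - (Submodule.orthogonalProjectionOnto W y : H)⟫ := by
  have hx : x - (Submodule.orthogonalProjectionOnto W x : H) ∈ Wᗮ :=
    Submodule.sub_starProjection_mem_orthogonal x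
  have hy : y - (Submodule.orthogonalProjectionOnto W y : H) ∈ Wᗮ :=
    Submodule.sub_starProjection_mem_orthogonal y
  have h1 : ⟪(Submodule.orthogonalProjectionOnto W x : H), y - (Submodule.orthogonalProjectionOnto W y : H)⟫ = 0 :=
    (Submodule.mem_orthogonal W _).1 hy _ (SetLike.coe_mem _)
  have h2 : ⟪x - (Submodule.orthogonalProjectionOnto W x : H), (Submodule.orthogonalProjectionOnto W y : H)⟫ = 0 :=
    (Submodule.mem_orthogonal' W _).1 hx _ (SetLike.coe_mem _)
  simp only [inner_sub_left, inner_sub_right] at h1 h2 ⊢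
  linarith

lemma abel_succ (g q : ℕ → H) (N : ℕ) :
    ∑ k ∈ Finset.Icc 1 (N+1), ⟪g k, q k - q (k-1)⟫ =
      ⟪g (N+1), q (N+1)⟫ - ⟪g 1, q 0⟫ - ∑ k ∈ Finset.Icc 1 N, ⟪g (k+1) - g k, q k⟫ := by
  induction N with
  | zero => simp [inner_sub_right]
  | succ N ih =>
    rw [Finset.sum_Icc_succ_top (by omega : 1 ≤ N + 1 + 1), ih,
      Finset.sum_Icc_succ_top (by omega : 1 ≤ N + 1)]
    simp only [Nat.add_sub_cancel, inner_sub_left, inner_sub_right]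
    ring

lemma norm_tel (g : ℕ → H) (N : ℕ) :
    ‖g (N+1)‖ ≤ ‖g 1‖ + ∑ k ∈ Finset.Icc 1 N, ‖g (k+1) - g k‖ := by
  induction N with
  | zero => simp
  | succ N ih =>
    rw [Finset.sum_Icc_succ_top (by omega : 1 ≤ N + 1)]
    have h : ‖g (N+1+1)‖ ≤ ‖g (N+1)‖ + ‖g (N+1+1) - g (N+1)‖ := by
      have := norm_add_le (g (N+1)) (g (N+1+1) - g (N+1))
      simpa using this
    linarith

end Aux

set_option maxHeartbeats 2000000

/-- Energy estimate for the discrete wave scheme: there is a constant `C > 0`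
depending only on `ρ` such that
`E^{n+1/2}(v) ≤ C (E^{1/2}(v) + (τ R₁^n + Λ^{−1/2} H R₂^n)²)`, where
`R₁^n = Σ_{k=1}^n ‖π r^k‖` and
`R₂^n = ‖(I−π) r^1‖ + τ Σ_{k=1}^{n−1} ‖(I−π)((r^{k+1}−r^k)/τ)‖ + ‖(I−π) r^n‖`. -/
theorem energy_estimate (ρ : ℝ) (hρ0 : 0 ≤ ρ) (hρ1 : ρ < 1) :
    ∃ C : ℝ, 0 < C ∧
      ∀ (H : Type) [NormedAddCommGroup H] [InnerProductSpace ℝ H]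
        (W V : Submodule ℝ H) [W.HasOrthogonalProjection]
        (a : H →ₗ[ℝ] H →ₗ[ℝ] ℝ), (∀ u w : H, a u w = a w u) →
      ∀ τ : ℝ, 0 < τ →
      ∀ Λ Hc : ℝ, 0 < Λ → 0 < Hc →
      (∀ w ∈ V, 0 ≤ a w w) →
      (∀ w ∈ V, τ ^ 2 * a w w ≤ 4 * ρ ^ 2 * ‖(Submodule.orthogonalProjectionOnto W w : H)‖ ^ 2) →
      (∀ w ∈ V, ‖w - (Submodule.orthogonalProjectionOnto W w : H)‖ ^ 2 ≤ 2 * Λ⁻¹ * Hc ^ 2 * a w w) →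
      ∀ v r : ℕ → H, (∀ n, v n ∈ V) →
      (∀ n, 1 ≤ n → ∀ w ∈ V,
        ⟪(Submodule.orthogonalProjectionOnto W ((τ ^ 2)⁻¹ • (v (n + 1) - 2 • v n + v (n - 1))) : H),
          (Submodule.orthogonalProjectionOnto W w : H)⟫ + a (v n) w = ⟪r n, w⟫) →
      ∀ n, 1 ≤ n →
        discE W a τ v n
          ≤ C * (discE W a τ v 0
            + (τ * (∑ k ∈ Finset.Icc 1 n, ‖(Submodule.orthogonalProjectionOnto W (r k) : H)‖)
              + (Real.sqrt Λ)⁻¹ * Hc *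
                (‖r 1 - (Submodule.orthogonalProjectionOnto W (r 1) : H)‖
                  + τ * ∑ k ∈ Finset.Icc 1 (n - 1),
                      ‖τ⁻¹ • (r (k + 1) - r k)
                        - (Submodule.orthogonalProjectionOnto W (τ⁻¹ • (r (k + 1) - r k)) : H)‖
                  + ‖r n - (Submodule.orthogonalProjectionOnto W (r n) : H)‖)) ^ 2) := by
  have hρ2 : 0 < 1 - ρ ^ 2 := by nlinarith
  set c : ℝ := Real.sqrt (2 / (1 - ρ ^ 2)) + 4 with hc
  have hc0 : 0 < c := by positivity
  refine ⟨2 + c ^ 2, by positivity, ?_⟩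
  intro H _ _ W V _ a hsym τ hτ Λ Hc hΛ hHc ha0 hCFL hPoin v r hv hscheme n hn
  have hτ' : τ ≠ 0 := ne_of_gt hτ
  set P : H →ₗ[ℝ] H := ((W.subtypeL.comp (Submodule.orthogonalProjectionOnto W) : H →L[ℝ] H) : H →ₗ[ℝ] H)
    with hPdef
  have hPx : ∀ x : H, P x = (Submodule.orthogonalProjectionOnto W x : H) := fun x => rfl
  set E : ℕ → ℝ := discE W a τ v with hE
  set d : ℕ → H := fun j => τ⁻¹ • (v (j+1) - v j) with hd
  set m : ℕ → H := fun j => (2:ℝ)⁻¹ • (v (j+1) + v j) with hm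
  set g : ℕ → H := fun k => r k - P (r k) with hg
  set q : ℕ → H := fun j => m j - P (m j) with hq
  have hdV : ∀ j, d j ∈ V := fun j => V.smul_mem _ (V.sub_mem (hv _) (hv _))
  have hmV : ∀ j, m j ∈ V := fun j => V.smul_mem _ (V.add_mem (hv _) (hv _))
  have hEdef : ∀ j, E j = (1/2) * ‖P (d j)‖^2 - (τ^2/8) * a (d j) (d j)
      + (1/2) * a (m j) (m j) := fun j => rfl
  -- step identity
  have hstep : ∀ k : ℕ, E (k+1) = E k + ⟪r (k+1), (2:ℝ)⁻¹ • (v (k+2) - v k)⟫ := by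
    intro k
    have hw : (2:ℝ)⁻¹ • (v (k+2) - v k) ∈ V := V.smul_mem _ (V.sub_mem (hv _) (hv _))
    have hs := hscheme (k+1) (by omega) _ hw
    rw [hEdef (k+1), hEdef k]
    simp only [hd, hm]
    exact step_alg P a hsym τ hτ' (v (k+2)) (v (k+1)) (v k) (r (k+1)) hs
  -- telescoped identity
  have hEsum : ∀ N : ℕ, E N = E 0
      + ∑ k ∈ Finset.Icc 1 N, ⟪r k, (2:ℝ)⁻¹ • (v (k+1) - v (k-1))⟫ := by
    intro N
    induction N with
    | zero => simp
    | succ N ih =>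
      rw [Finset.sum_Icc_succ_top (by omega : 1 ≤ N + 1), hstep N, ih]
      simp only [Nat.add_sub_cancel]
      ring
  -- difference of averages
  have hmdiff : ∀ k : ℕ, 1 ≤ k →
      (2:ℝ)⁻¹ • (v (k+1) - v (k-1)) = m k - m (k-1) := by
    intro k hk
    obtain ⟨j, rfl⟩ : ∃ j, k = j + 1 := ⟨k - 1, by omega⟩
    simp only [hm, Nat.add_sub_cancel]
    rw [← smul_sub]
    congr 1
    abel
  -- splitting of the source term
  have hsplit : ∀ k : ℕ, 1 ≤ k →
      ⟪r k, (2:ℝ)⁻¹ • (v (k+1) - v (k-1))⟫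
        = ⟪P (r k), P ((2:ℝ)⁻¹ • (v (k+1) - v (k-1)))⟫ + ⟪g k, q k - q (k-1)⟫ := by
    intro k hk
    have h1 : (2:ℝ)⁻¹ • (v (k+1) - v (k-1)) - P ((2:ℝ)⁻¹ • (v (k+1) - v (k-1)))
        = q k - q (k-1) := by
      rw [hmdiff k hk]
      simp only [hq, map_sub]
      abel
    have h2 := inner_split W (r k) ((2:ℝ)⁻¹ • (v (k+1) - v (k-1)))
    simp only [← hPx] at h2
    rw [h1] at h2
    simpa [hg] using h2
  clear_value P E d m g q
  -- lower bound of the energy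
  have hlow : ∀ j : ℕ, (1 - ρ^2)/2 * ‖P (d j)‖^2 + (1/2) * a (m j) (m j) ≤ E j := by
    intro j
    have h1 := hCFL (d j) (hdV j)
    rw [← hPx] at h1
    rw [hEdef j]
    linarith
  have hE0 : ∀ j, 0 ≤ E j := by
    intro j
    have h1 := hlow j
    have h2 := ha0 (m j) (hmV j)
    have h3 : 0 ≤ (1 - ρ^2)/2 * ‖P (d j)‖^2 := by positivity
    linarith
  -- the running maximum
  have hne : (Finset.range (n+1)).Nonempty := ⟨0, by simp⟩
  set M : ℝ := (Finset.range (n+1)).sup' hne E with hM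
  have hjM : ∀ j, j ≤ n → E j ≤ M := fun j hj =>
    Finset.le_sup' E (Finset.mem_range.2 (by omega))
  have hM0 : 0 ≤ M := le_trans (hE0 0) (hjM 0 (by omega))
  set s : ℝ := Real.sqrt M with hsdef
  have hs0 : 0 ≤ s := Real.sqrt_nonneg M
  have hs2 : s ^ 2 = M := Real.sq_sqrt hM0
  set D : ℝ := Real.sqrt (2 / (1 - ρ ^ 2)) * s with hD
  set Q : ℝ := 2 * (Real.sqrt Λ)⁻¹ * Hc * s with hQ
  have hD0 : 0 ≤ D := by positivity
  have hQ0 : 0 ≤ Q := by positivity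
  have hdbd : ∀ j, j ≤ n → ‖P (d j)‖ ≤ D := by
    intro j hj
    have h1 := hlow j
    have h2 := ha0 (m j) (hmV j)
    have h3 : E j ≤ M := hjM j hj
    refine sq_le_of_sq_le' (norm_nonneg _) hD0 ?_
    have hD2 : D ^ 2 = 2 / (1 - ρ ^ 2) * M := by
      rw [hD, mul_pow, Real.sq_sqrt (by positivity), hs2]
    rw [hD2]
    rw [div_mul_eq_mul_div, le_div_iff₀ hρ2]
    have h4 : 0 ≤ a (m j) (m j) := ha0 (m j) (hmV j)
    linarith
  have hqbd : ∀ j, j ≤ n → ‖q j‖ ≤ Q := by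
    intro j hj
    have h1 := hlow j
    have h2 := hPoin (m j) (hmV j)
    rw [← hPx] at h2
    have h3 : E j ≤ M := hjM j hj
    refine sq_le_of_sq_le' (norm_nonneg _) hQ0 ?_
    have hQ2 : Q ^ 2 = 4 * Λ⁻¹ * Hc ^ 2 * M := by
      rw [hQ, mul_pow, mul_pow, mul_pow, inv_pow, Real.sq_sqrt hΛ.le, hs2]
      ring
    rw [hQ2]
    have h4 : ‖q j‖ ^ 2 ≤ 2 * Λ⁻¹ * Hc ^ 2 * a (m j) (m j) := by
      simp only [hq]; exact h2
    have h5 : a (m j) (m j) ≤ 2 * M := by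
      have h7 : 0 ≤ (1 - ρ^2)/2 * ‖P (d j)‖^2 := by positivity
      linarith
    have h6 : (0:ℝ) ≤ 2 * Λ⁻¹ * Hc ^ 2 := by positivity
    calc ‖q j‖ ^ 2 ≤ 2 * Λ⁻¹ * Hc ^ 2 * a (m j) (m j) := h4
      _ ≤ 2 * Λ⁻¹ * Hc ^ 2 * (2 * M) := by
          exact mul_le_mul_of_nonneg_left h5 h6
      _ = 4 * Λ⁻¹ * Hc ^ 2 * M := by ring
  set R₁ : ℝ := ∑ k ∈ Finset.Icc 1 n, ‖P (r k)‖ with hR₁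
  set T : ℝ := ∑ k ∈ Finset.Icc 1 (n-1), ‖g (k+1) - g k‖ with hT
  set R₂ : ℝ := ‖g 1‖ + T + ‖g n‖ with hR₂
  have hR₁0 : 0 ≤ R₁ := Finset.sum_nonneg fun k _ => norm_nonneg _
  have hT0 : 0 ≤ T := Finset.sum_nonneg fun k _ => norm_nonneg _
  have hR₂0 : 0 ≤ R₂ := by
    have := norm_nonneg (g 1); have := norm_nonneg (g n); rw [hR₂]; linarith
  clear_value M s D Q R₁ T R₂
  have hmbd : ∀ k, 1 ≤ k → k ≤ n → ‖P ((2:ℝ)⁻¹ • (v (k+1) - v (k-1)))‖ ≤ τ * D := by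
    intro k hk hkn
    obtain ⟨j, rfl⟩ : ∃ j, k = j + 1 := ⟨k - 1, by omega⟩
    have hvd : (2:ℝ)⁻¹ • (v (j+1+1) - v (j+1-1)) = (τ/2) • (d (j+1) + d j) := by
      simp only [hd, Nat.add_sub_cancel]
      rw [smul_add, smul_smul, smul_smul, ← smul_add]
      have hc2 : τ/2 * τ⁻¹ = 2⁻¹ := by field_simp
      rw [hc2]
      congr 1
      abel
    rw [hvd, map_smul, map_add, norm_smul]
    have h1 : ‖P (d (j+1))‖ ≤ D := hdbd (j+1) (by omega)
    have h2 : ‖P (d j)‖ ≤ D := hdbd j (by omega)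
    have h3 : ‖P (d (j+1)) + P (d j)‖ ≤ D + D :=
      le_trans (norm_add_le _ _) (by linarith)
    have h4 : ‖(τ/2 : ℝ)‖ = τ/2 := by
      rw [Real.norm_eq_abs, abs_of_pos (by positivity)]
    rw [h4]
    calc τ/2 * ‖P (d (j+1)) + P (d j)‖ ≤ τ/2 * (D + D) := by
          apply mul_le_mul_of_nonneg_left h3 (by positivity)
      _ = τ * D := by ring
  have hgK : ∀ K, 1 ≤ K → K ≤ n → ‖g K‖ ≤ ‖g 1‖ + T := by
    intro K hK hKn
    obtain ⟨N, rfl⟩ : ∃ N, K = N + 1 := ⟨K - 1, by omega⟩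
    refine le_trans (norm_tel g N) ?_
    have hsub : Finset.Icc 1 N ⊆ Finset.Icc 1 (n-1) :=
      Finset.Icc_subset_Icc_right (by omega)
    have h5 := Finset.sum_le_sum_of_subset_of_nonneg hsub
      (fun k _ _ => norm_nonneg (g (k+1) - g k))
    rw [hT]; linarith
  have hbound : ∀ K, K ≤ n → E K ≤ E 0 + τ * R₁ * D + 2 * R₂ * Q := by
    intro K hKn
    rcases Nat.eq_zero_or_pos K with h0 | hK1
    · subst h0
      have hp1 : 0 ≤ τ * R₁ * D := by positivity
      have hp2 : 0 ≤ 2 * R₂ * Q := by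
        have := mul_nonneg hR₂0 hQ0; linarith
      linarith
    · obtain ⟨N, rfl⟩ : ∃ N, K = N + 1 := ⟨K - 1, by omega⟩
      rw [hEsum (N+1),
        Finset.sum_congr rfl (fun k hk => hsplit k (Finset.mem_Icc.1 hk).1),
        Finset.sum_add_distrib, abel_succ g q N]
      have hS1 : ∑ k ∈ Finset.Icc 1 (N+1), ⟪P (r k), P ((2:ℝ)⁻¹ • (v (k+1) - v (k-1)))⟫
          ≤ τ * R₁ * D := by
        have hterm : ∀ k ∈ Finset.Icc 1 (N+1),
            ⟪P (r k), P ((2:ℝ)⁻¹ • (v (k+1) - v (k-1)))⟫ ≤ ‖P (r k)‖ * (τ * D) := by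
          intro k hk
          obtain ⟨hk1, hk2⟩ := Finset.mem_Icc.1 hk
          refine le_trans (real_inner_le_norm _ _) ?_
          exact mul_le_mul_of_nonneg_left (hmbd k hk1 (by omega)) (norm_nonneg _)
        calc ∑ k ∈ Finset.Icc 1 (N+1), ⟪P (r k), P ((2:ℝ)⁻¹ • (v (k+1) - v (k-1)))⟫
            ≤ ∑ k ∈ Finset.Icc 1 (N+1), ‖P (r k)‖ * (τ * D) := Finset.sum_le_sum hterm
          _ ≤ ∑ k ∈ Finset.Icc 1 n, ‖P (r k)‖ * (τ * D) := by
              refine Finset.sum_le_sum_of_subset_of_nonneg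
                (Finset.Icc_subset_Icc_right (by omega)) (fun k _ _ => ?_)
              have : 0 ≤ τ * D := by positivity
              exact mul_nonneg (norm_nonneg _) this
          _ = R₁ * (τ * D) := by rw [hR₁, Finset.sum_mul]
          _ = τ * R₁ * D := by ring
      have hS2 : ⟪g (N+1), q (N+1)⟫ - ⟪g 1, q 0⟫
          - ∑ k ∈ Finset.Icc 1 N, ⟪g (k+1) - g k, q k⟫ ≤ 2 * R₂ * Q := by
        have hA : ⟪g (N+1), q (N+1)⟫ ≤ (‖g 1‖ + T) * Q := by
          refine le_trans (real_inner_le_norm _ _) ?_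
          have hgq : 0 ≤ ‖g 1‖ + T := by have := norm_nonneg (g 1); linarith
          exact mul_le_mul (hgK (N+1) (by omega) hKn) (hqbd (N+1) hKn)
            (norm_nonneg _) hgq
        have hB : -⟪g 1, q 0⟫ ≤ ‖g 1‖ * Q := by
          refine le_trans (neg_le_abs _) ?_
          refine le_trans (abs_real_inner_le_norm _ _) ?_
          exact mul_le_mul_of_nonneg_left (hqbd 0 (by omega)) (norm_nonneg _)
        have hC : -∑ k ∈ Finset.Icc 1 N, ⟪g (k+1) - g k, q k⟫ ≤ T * Q := by
          rw [← Finset.sum_neg_distrib]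
          have hterm : ∀ k ∈ Finset.Icc 1 N,
              -⟪g (k+1) - g k, q k⟫ ≤ ‖g (k+1) - g k‖ * Q := by
            intro k hk
            obtain ⟨hk1, hk2⟩ := Finset.mem_Icc.1 hk
            refine le_trans (neg_le_abs _) ?_
            refine le_trans (abs_real_inner_le_norm _ _) ?_
            exact mul_le_mul_of_nonneg_left (hqbd k (by omega)) (norm_nonneg _)
          calc ∑ k ∈ Finset.Icc 1 N, -⟪g (k+1) - g k, q k⟫
              ≤ ∑ k ∈ Finset.Icc 1 N, ‖g (k+1) - g k‖ * Q := Finset.sum_le_sum hterm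
            _ ≤ ∑ k ∈ Finset.Icc 1 (n-1), ‖g (k+1) - g k‖ * Q := by
                refine Finset.sum_le_sum_of_subset_of_nonneg
                  (Finset.Icc_subset_Icc_right (by omega)) (fun k _ _ => ?_)
                exact mul_nonneg (norm_nonneg _) hQ0
            _ = T * Q := by rw [hT, Finset.sum_mul]
        have h2R : 2 * R₂ * Q = 2*(‖g 1‖*Q) + 2*(T*Q) + 2*(‖g n‖*Q) := by
          rw [hR₂]; ring
        have hgn : 0 ≤ ‖g n‖ * Q := mul_nonneg (norm_nonneg _) hQ0
        have hAT : (‖g 1‖ + T) * Q = ‖g 1‖*Q + T*Q := by ring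
        rw [h2R]
        rw [hAT] at hA
        linarith
      linarith
  obtain ⟨j₀, hj₀mem, hMj⟩ := Finset.exists_mem_eq_sup' hne E
  have hMb : M ≤ E 0 + τ * R₁ * D + 2 * R₂ * Q := by
    rw [hM, hMj]
    exact hbound j₀ (by have := Finset.mem_range.1 hj₀mem; omega)
  have hEn : E n ≤ M := hjM n le_rfl
  clear_value c
  clear hscheme hsplit hEsum hstep hEdef hlow hmdiff hmbd hdbd hqbd hbound
    hCFL hPoin ha0 hsym hv hgK hMj hj₀mem hjM hM hsdef hne hdV hmV
  set B : ℝ := τ * R₁ + (Real.sqrt Λ)⁻¹ * Hc * R₂ with hB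
  have hΛs : 0 ≤ (Real.sqrt Λ)⁻¹ * Hc := by positivity
  have hB1 : 0 ≤ τ * R₁ := by positivity
  have hB2 : 0 ≤ (Real.sqrt Λ)⁻¹ * Hc * R₂ := mul_nonneg hΛs hR₂0
  have hB0 : 0 ≤ B := by rw [hB]; linarith
  clear_value B
  have hcs : τ * R₁ * D + 2 * R₂ * Q ≤ c * B * s := by
    have h1 : 0 ≤ Real.sqrt (2/(1-ρ^2)) := Real.sqrt_nonneg _
    have e1 : c * B * s = (Real.sqrt (2/(1-ρ^2)))*(τ*R₁)*s + 4*(τ*R₁)*s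
        + (Real.sqrt (2/(1-ρ^2)))*((Real.sqrt Λ)⁻¹*Hc*R₂)*s
        + 4*((Real.sqrt Λ)⁻¹*Hc*R₂)*s := by
      rw [hB, hc]; ring
    have e2 : τ * R₁ * D = (Real.sqrt (2/(1-ρ^2)))*(τ*R₁)*s := by rw [hD]; ring
    have e3 : 2 * R₂ * Q = 4*((Real.sqrt Λ)⁻¹*Hc*R₂)*s := by rw [hQ]; ring
    have p1 : 0 ≤ 4*(τ*R₁)*s :=
      mul_nonneg (mul_nonneg (by norm_num : (0:ℝ) ≤ 4) hB1) hs0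
    have p2 : 0 ≤ (Real.sqrt (2/(1-ρ^2)))*((Real.sqrt Λ)⁻¹*Hc*R₂)*s :=
      mul_nonneg (mul_nonneg h1 hB2) hs0
    rw [e1, e2, e3]
    linarith
  have hfin : M ≤ 2 * E 0 + c^2 * B^2 := by
    have h1 : s^2 ≤ E 0 + c * B * s := by rw [hs2]; linarith
    have h2 : (c*B)*s ≤ ((c*B)^2 + s^2)/2 := young (c*B) s
    have h3 : (c*B)^2 = c^2*B^2 := by ring
    linarith
  -- rewrite the goal
  have hcoe : ∀ x : H, (Submodule.orthogonalProjectionOnto W x : H) = P x := fun x => (hPx x).symm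
  have hgr : ∀ k : ℕ, r k - P (r k) = g k := fun k => by rw [hg]
  have hmid : ∀ k : ℕ,
      ‖τ⁻¹ • (r (k+1) - r k) - (Submodule.orthogonalProjectionOnto W (τ⁻¹ • (r (k+1) - r k)) : H)‖
        = τ⁻¹ * ‖g (k+1) - g k‖ := by
    intro k
    have h1 : τ⁻¹ • (r (k+1) - r k)
        - (Submodule.orthogonalProjectionOnto W (τ⁻¹ • (r (k+1) - r k)) : H)
        = τ⁻¹ • (g (k+1) - g k) := by
      rw [hcoe]
      simp only [hg, map_smul, map_sub, smul_sub]
      abel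
    rw [h1, norm_smul, Real.norm_eq_abs, abs_of_pos (inv_pos.2 hτ)]
  have hbr : ‖r 1 - (Submodule.orthogonalProjectionOnto W (r 1) : H)‖
      + τ * ∑ k ∈ Finset.Icc 1 (n - 1),
          ‖τ⁻¹ • (r (k + 1) - r k)
            - (Submodule.orthogonalProjectionOnto W (τ⁻¹ • (r (k + 1) - r k)) : H)‖
      + ‖r n - (Submodule.orthogonalProjectionOnto W (r n) : H)‖ = R₂ := by
    rw [Finset.sum_congr rfl (fun k _ => hmid k), ← Finset.mul_sum, ← mul_assoc,
      mul_inv_cancel₀ hτ', one_mul, hcoe, hcoe, hgr, hgr, hR₂, hT]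
  have hR₁g : ∑ k ∈ Finset.Icc 1 n, ‖(Submodule.orthogonalProjectionOnto W (r k) : H)‖ = R₁ := by
    rw [hR₁]
    exact Finset.sum_congr rfl (fun k _ => by rw [hcoe])
  rw [hbr, hR₁g, ← hB]
  have q1 : 0 ≤ B^2 := sq_nonneg B
  have q2 : 0 ≤ c^2 * E 0 := mul_nonneg (sq_nonneg c) (hE0 0)
  have expand : (2 + c^2) * (E 0 + B^2) = 2*E 0 + c^2*B^2 + 2*B^2 + c^2*(E 0) := by ring
  linarith
end
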